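/- arXiv:1407.1910 — 5 statements merged into one kernel-verified Lean document; each statement's English description precedes it below -/
import Mathlib

section
/- Let G=(V,E,w) have distinct edge weights, let T=mst(G), and let e∈T. Let C^{-1}(e) be the set of non-tree edges f such that e lies on the tree path between the endpoints of f. Then T remains the minimum spanning tree of the graph obtained by changing w(e) to any value w'(e) with w'(e) < min_{f∈C^{-1}(e)} w(f) (where min∅=∞), and T fails to be the MST if w'(e) > min_{f∈C^{-1}(e)} w(f) for some such f. -/
open SimpleGraph

def IsSpanningTree {V : Type*} (G : SimpleGraph V) (T : Finset (Sym2 V)) : Prop :=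
  ↑T ⊆ G.edgeSet ∧ (SimpleGraph.fromEdgeSet (↑T : Set (Sym2 V))).IsTree

def IsMST {V : Type*} (G : SimpleGraph V) (w : Sym2 V → ℝ) (T : Finset (Sym2 V)) : Prop :=
  IsSpanningTree G T ∧ ∀ T' : Finset (Sym2 V), IsSpanningTree G T' →
    ∑ e ∈ T, w e ≤ ∑ e ∈ T', w e

/-- `e` lies on the (unique) path in the tree `fromEdgeSet ↑T` between the two
endpoints of the edge `f`. -/
def OnTreePath {V : Type*} (T : Finset (Sym2 V)) (e f : Sym2 V) : Prop :=
  ∃ (a b : V) (p : (SimpleGraph.fromEdgeSet (↑T : Set (Sym2 V))).Walk a b),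
    p.IsPath ∧ f = s(a, b) ∧ e ∈ p.edges

section AuxLemmas

variable {V : Type*}

variable {V : Type*}

/-- If the endpoints of a deleted edge remain reachable, all reachability is preserved. -/
lemma reach_del_of_reach {G : SimpleGraph V} {a b : V}
    (hab : (G.deleteEdges {s(a, b)}).Reachable a b) :
    ∀ {u v : V}, G.Reachable u v → (G.deleteEdges {s(a, b)}).Reachable u v := by
  intro u v h
  obtain ⟨p⟩ := h
  induction p with
  | nil => exact Reachable.refl _
  | @cons u x v h' q ih =>
    refine Reachable.trans ?_ ih
    by_cases he : s(u, x) = s(a, b)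
    · rw [Sym2.eq_iff] at he
      rcases he with ⟨rfl, rfl⟩ | ⟨rfl, rfl⟩
      · exact hab
      · exact hab.symm
    · exact (deleteEdges_adj.mpr ⟨h', by simpa using he⟩).reachable

lemma connected_deleteEdges_of_not_isBridge {G : SimpleGraph V}
    (hG : G.Connected) {e : Sym2 V} (heE : e ∈ G.edgeSet) (hb : ¬ G.IsBridge e) :
    (G.deleteEdges {e}).Connected := by
  induction e using Sym2.ind with
  | _ a b =>
    rw [isBridge_iff] at hb
    push_neg at hb
    have hr : (G.deleteEdges {s(a, b)}).Reachable a b := hb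
    have := hG.nonempty
    exact ⟨fun u v => reach_del_of_reach hr (hG u v)⟩

lemma tree_ncard [Fintype V] {G : SimpleGraph V} (hG : G.IsTree) :
    G.edgeSet.ncard + 1 = Fintype.card V := by
  classical
  have : Fintype G.edgeSet := Set.Finite.fintype (Set.toFinite _)
  rw [Set.ncard_eq_toFinset_card']
  exact hG.card_edgeFinset

lemma card_le_of_connected [Fintype V] :
    ∀ (n : ℕ) (G : SimpleGraph V), G.edgeSet.ncard = n → G.Connected →
      Fintype.card V ≤ n + 1 := by
  intro n
  induction n using Nat.strong_induction_on with
  | _ n ih =>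
    intro G hn hG
    by_cases ha : G.IsAcyclic
    · exact le_of_eq (hn ▸ (tree_ncard ⟨hG, ha⟩).symm)
    · rw [isAcyclic_iff_forall_edge_isBridge] at ha
      push_neg at ha
      obtain ⟨e, heE, hb⟩ := ha
      have hconn := connected_deleteEdges_of_not_isBridge hG heE hb
      have hpos : 0 < n := hn ▸ (Set.ncard_pos (Set.toFinite _)).mpr ⟨e, heE⟩
      have hcard : (G.deleteEdges {e}).edgeSet.ncard = n - 1 := by
        rw [edgeSet_deleteEdges, Set.ncard_diff_singleton_of_mem heE, hn]
      have := ih (n - 1) (by omega) _ hcard hconn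
      omega

lemma isTree_of_connected_of_card [Fintype V] {G : SimpleGraph V}
    (hG : G.Connected) (hcard : G.edgeSet.ncard + 1 ≤ Fintype.card V) : G.IsTree := by
  refine ⟨hG, ?_⟩
  by_contra ha
  rw [isAcyclic_iff_forall_edge_isBridge] at ha
  push_neg at ha
  obtain ⟨e, heE, hb⟩ := ha
  have hconn := connected_deleteEdges_of_not_isBridge hG heE hb
  have h2 := card_le_of_connected _ _ rfl hconn
  have hpos : 0 < G.edgeSet.ncard := (Set.ncard_pos (Set.toFinite _)).mpr ⟨e, heE⟩
  have hcard' : (G.deleteEdges {e}).edgeSet.ncard = G.edgeSet.ncard - 1 := by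
    rw [edgeSet_deleteEdges, Set.ncard_diff_singleton_of_mem heE]
  omega


variable {V : Type*}

lemma edgeSet_fromFinset {G : SimpleGraph V} {T : Finset (Sym2 V)}
    (hsub : ↑T ⊆ G.edgeSet) :
    (fromEdgeSet (↑T : Set (Sym2 V))).edgeSet = ↑T := by
  rw [edgeSet_fromEdgeSet]
  ext x
  simp only [Set.mem_diff, Set.mem_setOf_eq, Finset.mem_coe, and_iff_left_iff_imp]
  exact fun hx => G.not_isDiag_of_mem_edgeSet (hsub hx)

lemma spanningTree_card [Fintype V] {G : SimpleGraph V} {T : Finset (Sym2 V)}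
    (hT : IsSpanningTree G T) : T.card + 1 = Fintype.card V := by
  have := tree_ncard hT.2
  rwa [edgeSet_fromFinset hT.1, Set.ncard_coe_finset] at this

lemma mem_T_of_mem_edges {T : Finset (Sym2 V)} {a b : V}
    {p : (fromEdgeSet (↑T : Set (Sym2 V))).Walk a b} {e : Sym2 V}
    (he : e ∈ p.edges) : e ∈ T := by
  have := p.edges_subset_edgeSet he
  rw [edgeSet_fromEdgeSet] at this
  exact this.1

lemma swap_graph_eq [DecidableEq V] {T : Finset (Sym2 V)} {e f : Sym2 V} (hfe : f ≠ e) :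
    fromEdgeSet (↑(insert f (T.erase e)) : Set (Sym2 V)) =
      (fromEdgeSet (insert f (↑T : Set (Sym2 V)))).deleteEdges {e} := by
  ext x y
  simp only [fromEdgeSet_adj, Finset.coe_insert, Set.mem_insert_iff, Finset.mem_coe,
    Finset.mem_insert, Finset.mem_erase, deleteEdges_adj, Set.mem_singleton_iff]
  constructor
  · rintro ⟨(rfl | ⟨hne, hmem⟩), hxy⟩
    · exact ⟨⟨Or.inl rfl, hxy⟩, hfe⟩
    · exact ⟨⟨Or.inr hmem, hxy⟩, hne⟩
  · rintro ⟨⟨(rfl | hmem), hxy⟩, hne⟩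
    · exact ⟨Or.inl rfl, hxy⟩
    · exact ⟨Or.inr ⟨hne, hmem⟩, hxy⟩

/-- Exchange lemma: replacing a tree edge `e` by a non-tree edge `f` whose tree path
contains `e` gives another spanning tree. -/
lemma exchange_spanningTree [Fintype V] [DecidableEq V] {G : SimpleGraph V}
    {T : Finset (Sym2 V)} (hT : IsSpanningTree G T) {f : Sym2 V} (hfE : f ∈ G.edgeSet)
    (hfT : f ∉ T) {a b : V} (p : (fromEdgeSet (↑T : Set (Sym2 V))).Walk a b)
    (hp : p.IsPath) (hfab : f = s(a, b)) {e : Sym2 V} (he : e ∈ p.edges) :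
    IsSpanningTree G (insert f (T.erase e)) := by
  have heT : e ∈ T := mem_T_of_mem_edges he
  have hfe : f ≠ e := fun h => hfT (h ▸ heT)
  have hab : a ≠ b := by
    have := G.not_isDiag_of_mem_edgeSet hfE
    rw [hfab] at this; simpa using this
  have hsub : ↑(insert f (T.erase e)) ⊆ G.edgeSet := by
    intro x hx
    simp only [Finset.coe_insert, Set.mem_insert_iff, Finset.mem_coe, Finset.mem_erase] at hx
    rcases hx with rfl | ⟨_, hx⟩
    · exact hfE
    · exact hT.1 hx
  refine ⟨hsub, ?_⟩
  -- the bigger graph with f added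
  set Tf := fromEdgeSet (insert f (↑T : Set (Sym2 V))) with hTf
  have hle : fromEdgeSet (↑T : Set (Sym2 V)) ≤ Tf :=
    fromEdgeSet_mono (Set.subset_insert _ _)
  have hTfconn : Tf.Connected := hT.2.isConnected.mono hle
  -- transfer the path into Tf
  have hpe : ∀ e' ∈ p.edges, e' ∈ Tf.edgeSet := by
    intro e' he'
    exact edgeSet_subset_edgeSet.mpr hle (p.edges_subset_edgeSet he')
  set q : Tf.Walk a b := p.transfer Tf hpe with hq
  have hqpath : q.IsPath := hp.transfer hpe
  have hTfadj : Tf.Adj b a := by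
    rw [hTf, fromEdgeSet_adj]
    exact ⟨by rw [Sym2.eq_swap, ← hfab]; exact Set.mem_insert _ _, hab.symm⟩
  have hfq : s(b, a) ∉ q.edges := by
    rw [hq, Walk.edges_transfer]
    intro hmem
    exact hfT (by rw [hfab, Sym2.eq_swap]; exact mem_T_of_mem_edges hmem)
  have hcyc : (SimpleGraph.Walk.cons hTfadj q).IsCycle :=
    SimpleGraph.Path.cons_isCycle ⟨q, hqpath⟩ hTfadj hfq
  have heq : e ∈ (SimpleGraph.Walk.cons hTfadj q).edges := by
    rw [Walk.edges_cons]
    exact List.mem_cons_of_mem _ (by rw [hq, Walk.edges_transfer]; exact he)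
  have heTf : e ∈ Tf.edgeSet := hpe e he
  have hnb : ¬ Tf.IsBridge e := by
    rw [isBridge_iff_mem_and_forall_cycle_notMem heTf]
    intro hall
    exact hall _ hcyc heq
  have hconn : (Tf.deleteEdges {e}).Connected :=
    connected_deleteEdges_of_not_isBridge hTfconn heTf hnb
  rw [← swap_graph_eq hfe] at hconn
  refine isTree_of_connected_of_card hconn ?_
  have hcard : (insert f (T.erase e)).card = T.card := by
    rw [Finset.card_insert_of_notMem (fun h => hfT (Finset.mem_of_mem_erase h)),
      Finset.card_erase_of_mem heT]
    have : 0 < T.card := Finset.card_pos.mpr ⟨e, heT⟩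
    omega
  rw [edgeSet_fromFinset hsub, Set.ncard_coe_finset, hcard]
  exact le_of_eq (spanningTree_card hT)

/-- The cycle property of an MST: a tree edge on the path of a non-tree edge `f` is
lighter than `f`. -/
lemma mst_cycle_property [Fintype V] [DecidableEq V] {G : SimpleGraph V}
    {w : Sym2 V → ℝ} (hw : Set.InjOn w G.edgeSet) {T : Finset (Sym2 V)}
    (hT : IsMST G w T) {f : Sym2 V} (hfE : f ∈ G.edgeSet) (hfT : f ∉ T)
    {a b : V} (p : (fromEdgeSet (↑T : Set (Sym2 V))).Walk a b)
    (hp : p.IsPath) (hfab : f = s(a, b)) {e : Sym2 V} (he : e ∈ p.edges) :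
    w e < w f := by
  have heT : e ∈ T := mem_T_of_mem_edges he
  have hsp := exchange_spanningTree hT.1 hfE hfT p hp hfab he
  have hsum := hT.2 _ hsp
  rw [Finset.sum_insert (fun h => hfT (Finset.mem_of_mem_erase h)),
    Finset.sum_erase_eq_sub heT] at hsum
  have hle : w e ≤ w f := by linarith
  rcases lt_or_eq_of_le hle with h | h
  · exact h
  · exact absurd (hw (hT.1.1 heT) hfE h) (fun h' => hfT (h' ▸ heT))

/-- Every vertex is reachable from one of the two endpoints of a deleted edge. -/
lemma reach_or {G : SimpleGraph V} {a b : V} :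
    ∀ {u v : V}, G.Reachable u v →
      ((G.deleteEdges {s(a, b)}).Reachable a u ∨ (G.deleteEdges {s(a, b)}).Reachable b u) →
      ((G.deleteEdges {s(a, b)}).Reachable a v ∨ (G.deleteEdges {s(a, b)}).Reachable b v) := by
  intro u v h
  obtain ⟨p⟩ := h
  induction p with
  | nil => exact id
  | @cons u x v h' q ih =>
    intro hu
    apply ih
    by_cases he : s(u, x) = s(a, b)
    · rw [Sym2.eq_iff] at he
      rcases he with ⟨rfl, rfl⟩ | ⟨rfl, rfl⟩
      · exact Or.inr (Reachable.refl _)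
      · exact Or.inl (Reachable.refl _)
    · have hadj : (G.deleteEdges {s(a, b)}).Adj u x :=
        deleteEdges_adj.mpr ⟨h', by simpa using he⟩
      rcases hu with hu | hu
      · exact Or.inl (hu.trans hadj.reachable)
      · exact Or.inr (hu.trans hadj.reachable)

/-- Along a walk from a vertex satisfying `P` to one not satisfying `P` there is a
boundary edge. -/
lemma exists_boundary {G : SimpleGraph V} (P : V → Prop) :
    ∀ {u v : V} (p : G.Walk u v), P u → ¬ P v →
      ∃ x y, G.Adj x y ∧ s(x, y) ∈ p.edges ∧ P x ∧ ¬ P y := by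
  intro u v p
  induction p with
  | nil => intro h h'; exact absurd h h'
  | @cons u x v h q ih =>
    intro hu hv
    by_cases hx : P x
    · obtain ⟨x', y', hadj, hmem, hP, hnP⟩ := ih hx hv
      exact ⟨x', y', hadj, List.mem_cons_of_mem _ hmem, hP, hnP⟩
    · exact ⟨u, x, h, List.mem_cons_self, hu, hx⟩

lemma mst_of_cycle_property [Fintype V] [DecidableEq V] {G : SimpleGraph V}
    (hG : G.Connected) (w : Sym2 V → ℝ) {T : Finset (Sym2 V)} (hT : IsSpanningTree G T)
    (hcp : ∀ f ∈ G.edgeSet, f ∉ T → ∀ (a b : V)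
      (p : (fromEdgeSet (↑T : Set (Sym2 V))).Walk a b), p.IsPath → f = s(a, b) →
      ∀ e' ∈ p.edges, w e' < w f) : IsMST G w T := by
  classical
  set S : Finset (Finset (Sym2 V)) := Finset.univ.filter (fun T' => IsSpanningTree G T')
    with hS
  have hTS : T ∈ S := by simp [hS, hT]
  obtain ⟨T₀, hT₀S, hmin⟩ := Finset.exists_min_image S (fun T' => ∑ e ∈ T', w e) ⟨T, hTS⟩
  have hT₀ : IsSpanningTree G T₀ := by simpa [hS] using hT₀S
  have hsub : T₀ ⊆ T := by
    intro f hfT₀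
    by_contra hfT
    induction f using Sym2.ind with
    | _ a b =>
      have hfE : s(a, b) ∈ G.edgeSet := hT₀.1 hfT₀
      have hab : a ≠ b := by simpa using G.not_isDiag_of_mem_edgeSet hfE
      set H0 := fromEdgeSet (↑T₀ : Set (Sym2 V)) with hH0
      set D := H0.deleteEdges {s(a, b)} with hD
      have hbr : H0.IsBridge s(a, b) :=
        isAcyclic_iff_forall_edge_isBridge.mp hT₀.2.IsAcyclic
          (by rw [edgeSet_fromFinset hT₀.1]; exact hfT₀)
      have hnr : ¬ D.Reachable a b := isBridge_iff.mp hbr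
      obtain ⟨q⟩ := hT.2.isConnected a b
      set p : (fromEdgeSet (↑T : Set (Sym2 V))).Walk a b := (q.toPath : (fromEdgeSet (↑T : Set (Sym2 V))).Path a b).1 with hpdef
      have hp : p.IsPath := q.toPath.2
      obtain ⟨x, y, hadj, hmem, hPx, hPy⟩ :=
        exists_boundary (fun v => D.Reachable a v) p (Reachable.refl _) hnr
      have hxyT : s(x, y) ∈ T := mem_T_of_mem_edges hmem
      have hxyE : s(x, y) ∈ G.edgeSet := hT.1 hxyT
      have hne : s(x, y) ≠ s(a, b) := fun h => hfT (h ▸ hxyT)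
      have hxyT₀ : s(x, y) ∉ T₀ := by
        intro hmem₀
        have hadj' : D.Adj x y := by
          rw [hD, deleteEdges_adj]
          exact ⟨(fromEdgeSet_adj _).mpr ⟨hmem₀, hadj.ne⟩, by simpa using hne⟩
        exact hPy (hPx.trans hadj'.reachable)
      have hlt : w s(x, y) < w s(a, b) := hcp s(a, b) hfE hfT a b p hp rfl _ hmem
      set T'' : Finset (Sym2 V) := insert s(x, y) (T₀.erase s(a, b)) with hT''def
      have hsubT'' : ↑T'' ⊆ G.edgeSet := by
        intro z hz
        simp only [hT''def, Finset.coe_insert, Set.mem_insert_iff, Finset.mem_coe,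
          Finset.mem_erase] at hz
        rcases hz with rfl | ⟨_, hz⟩
        · exact hxyE
        · exact hT₀.1 hz
      set K := fromEdgeSet (insert s(x, y) (↑T₀ : Set (Sym2 V))) with hK
      set DK := K.deleteEdges {s(a, b)} with hDK
      have hK_le : H0 ≤ K := fromEdgeSet_mono (Set.subset_insert _ _)
      have hDK_le : D ≤ DK := by
        intro u v huv
        rw [hD, deleteEdges_adj] at huv
        rw [hDK, deleteEdges_adj]
        exact ⟨hK_le huv.1, huv.2⟩
      have hKadj : DK.Adj x y := by
        rw [hDK, deleteEdges_adj, hK, fromEdgeSet_adj]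
        exact ⟨⟨Set.mem_insert _ _, hadj.ne⟩, by simpa using hne⟩
      have hreach_b : DK.Reachable a b := by
        have h3 : D.Reachable b y := by
          rcases reach_or (hT₀.2.isConnected a y) (Or.inl (Reachable.refl _)) with h | h
          · exact absurd h hPy
          · exact h
        exact (hPx.mono hDK_le).trans (hKadj.reachable.trans (h3.mono hDK_le).symm)
      have key : ∀ v, DK.Reachable a v := by
        intro v
        rcases reach_or (hT₀.2.isConnected a v) (Or.inl (Reachable.refl _)) with h | h
        · exact h.mono hDK_le
        · exact hreach_b.trans (h.mono hDK_le)
      have hconn : DK.Connected := by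
        have := hG.nonempty
        exact ⟨fun u v => (key u).symm.trans (key v)⟩
      have hgeq : fromEdgeSet (↑T'' : Set (Sym2 V)) = DK := by
        rw [hT''def, hDK, hK]
        exact swap_graph_eq hne
      have hcard : T''.card = T₀.card := by
        rw [hT''def, Finset.card_insert_of_notMem
          (fun h => hxyT₀ (Finset.mem_of_mem_erase h)), Finset.card_erase_of_mem hfT₀]
        have : 0 < T₀.card := Finset.card_pos.mpr ⟨_, hfT₀⟩
        omega
      have hST'' : IsSpanningTree G T'' := by
        refine ⟨hsubT'', ?_⟩
        rw [hgeq]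
        refine isTree_of_connected_of_card hconn ?_
        rw [← hgeq, edgeSet_fromFinset hsubT'', Set.ncard_coe_finset, hcard]
        exact le_of_eq (spanningTree_card hT₀)
      have hsum : ∑ e ∈ T'', w e < ∑ e ∈ T₀, w e := by
        rw [hT''def, Finset.sum_insert (fun h => hxyT₀ (Finset.mem_of_mem_erase h)),
          Finset.sum_erase_eq_sub hfT₀]
        linarith
      have := hmin T'' (by simp [hS, hST''])
      linarith
  have hT₀T : T₀ = T := by
    refine Finset.eq_of_subset_of_card_le hsub ?_
    have h1 := spanningTree_card hT
    have h2 := spanningTree_card hT₀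
    omega
  refine ⟨hT, fun T' h' => ?_⟩
  have := hmin T' (by simp [hS, h'])
  simpa [hT₀T] using this

end AuxLemmas

/-- Sensitivity of a tree edge `e ∈ T`: with `C⁻¹(e)` the set of non-tree edges whose
tree path contains `e`, the tree `T` remains the MST after lowering the weight of `e`
below `min_{f ∈ C⁻¹(e)} w f` (vacuously any value if `C⁻¹(e) = ∅`, i.e. `min ∅ = ∞`),
and ceases to be the MST if the new weight exceeds `w f` for some `f ∈ C⁻¹(e)`. -/
theorem tree_edge_sensitivity {V : Type*} [Fintype V] [DecidableEq V]
    (G : SimpleGraph V) (hG : G.Connected)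
    (w : Sym2 V → ℝ) (hw : Set.InjOn w G.edgeSet)
    (T : Finset (Sym2 V)) (hT : IsMST G w T)
    (e : Sym2 V) (he : e ∈ T)
    (w' : Sym2 V → ℝ) (hw' : Set.InjOn w' G.edgeSet)
    (hsame : ∀ f, f ≠ e → w' f = w f) :
    ((∀ f ∈ G.edgeSet, f ∉ T → OnTreePath T e f → w' e < w f) → IsMST G w' T) ∧
    ((∃ f ∈ G.edgeSet, f ∉ T ∧ OnTreePath T e f ∧ w f < w' e) → ¬ IsMST G w' T) := by
  have hTst : IsSpanningTree G T := hT.1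
  have heE : e ∈ G.edgeSet := hTst.1 he
  constructor
  · intro H
    refine mst_of_cycle_property hG w' hTst ?_
    intro f hfE hfT a b p hp hfab e' he'
    have hfne : f ≠ e := fun h => hfT (h ▸ he)
    have hwf : w' f = w f := hsame f hfne
    by_cases hee : e' = e
    · subst hee
      rw [hwf]
      exact H f hfE hfT ⟨a, b, p, hp, hfab, he'⟩
    · rw [hwf, hsame e' hee]
      exact mst_cycle_property hw hT hfE hfT p hp hfab he'
  · rintro ⟨f, hfE, hfT, ⟨a, b, p, hp, hfab, hep⟩, hlt⟩ hMST
    have hfne : f ≠ e := fun h => hfT (h ▸ he)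
    have hsp := exchange_spanningTree hTst hfE hfT p hp hfab hep
    have hsum := hMST.2 _ hsp
    rw [Finset.sum_insert (fun h => hfT (Finset.mem_of_mem_erase h)),
      Finset.sum_erase_eq_sub he, hsame f hfne] at hsum
    linarith
end

section
/- Let G=(V,E,w) have distinct edge weights, let T=mst(G), let e∈T, and let (V₀,V₁) be the partition of V into the two connected components of T∖{e}. Then the minimum-weight edge of E∖T crossing the cut (V₀,V₁), if one exists, belongs to mst(G∖T), the minimum spanning forest of the graph (V, E∖T). -/
open SimpleGraph

/-- `F` is a minimum spanning forest of `H`: an acyclic subset of the edges of `H`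
preserving reachability in every connected component, of minimum total weight among
all such edge sets. -/
def IsMSF {V : Type*} (H : SimpleGraph V) (w : Sym2 V → ℝ) (F : Finset (Sym2 V)) : Prop :=
  (↑F ⊆ H.edgeSet ∧ (SimpleGraph.fromEdgeSet (↑F : Set (Sym2 V))).IsAcyclic ∧
    ∀ u v : V, H.Reachable u v → (SimpleGraph.fromEdgeSet (↑F : Set (Sym2 V))).Reachable u v) ∧
  ∀ F' : Finset (Sym2 V),
    (↑F' ⊆ H.edgeSet ∧ (SimpleGraph.fromEdgeSet (↑F' : Set (Sym2 V))).IsAcyclic ∧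
      ∀ u v : V, H.Reachable u v → (SimpleGraph.fromEdgeSet (↑F' : Set (Sym2 V))).Reachable u v) →
    ∑ e ∈ F, w e ≤ ∑ e ∈ F', w e

def CrossesCut {V : Type*} (V' : Set V) (e : Sym2 V) : Prop :=
  ∃ x y : V, e = s(x, y) ∧ x ∈ V' ∧ y ∉ V'


lemma cross_split {V : Type*} {K : SimpleGraph V} {S : Set V} :
    ∀ {x y : V} (p : K.Walk x y), x ∈ S → y ∉ S →
      ∃ (u v : V) (_ : K.Adj u v) (q₁ : K.Walk x u) (q₂ : K.Walk v y),
        u ∈ S ∧ v ∉ S ∧ p.edges = q₁.edges ++ s(u, v) :: q₂.edges := by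
  intro x y p
  induction p with
  | nil => intro hx hy; exact absurd hx hy
  | @cons x c y h q ih =>
    intro hx hy
    by_cases hc : c ∈ S
    · obtain ⟨u, v, huv, q₁, q₂, hu, hv, hed⟩ := ih hc hy
      exact ⟨u, v, huv, Walk.cons h q₁, q₂, hu, hv, by simp [hed]⟩
    · exact ⟨x, c, h, Walk.nil, q, hx, hc, by simp⟩

theorem replacement_edge_in_msf' {V : Type*} [Fintype V] [DecidableEq V]
    (G : SimpleGraph V)
    (w : Sym2 V → ℝ) (hw : Set.InjOn w G.edgeSet)
    (T : Finset (Sym2 V))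
    (V₀ : Set V)
    (F : Finset (Sym2 V))
    (hF1 : ↑F ⊆ (G.deleteEdges (↑T : Set (Sym2 V))).edgeSet)
    (hF2 : (SimpleGraph.fromEdgeSet (↑F : Set (Sym2 V))).IsAcyclic)
    (hF3 : ∀ u v : V, (G.deleteEdges (↑T : Set (Sym2 V))).Reachable u v →
      (SimpleGraph.fromEdgeSet (↑F : Set (Sym2 V))).Reachable u v)
    (hFmin : ∀ F' : Finset (Sym2 V),
      (↑F' ⊆ (G.deleteEdges (↑T : Set (Sym2 V))).edgeSet ∧
        (SimpleGraph.fromEdgeSet (↑F' : Set (Sym2 V))).IsAcyclic ∧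
        ∀ u v : V, (G.deleteEdges (↑T : Set (Sym2 V))).Reachable u v →
          (SimpleGraph.fromEdgeSet (↑F' : Set (Sym2 V))).Reachable u v) →
      ∑ e ∈ F, w e ≤ ∑ e ∈ F', w e)
    (f : Sym2 V) (hf : f ∈ G.edgeSet) (hfT : f ∉ T) (hcross : CrossesCut V₀ f)
    (hmin : ∀ g ∈ G.edgeSet, g ∉ T → CrossesCut V₀ g → w f ≤ w g) :
    f ∈ F := by
  classical
  set H := G.deleteEdges (↑T : Set (Sym2 V)) with hH
  set HF := SimpleGraph.fromEdgeSet (↑F : Set (Sym2 V)) with hHF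
  obtain ⟨x, y, hfxy, hx, hy⟩ := hcross
  have hxy : x ≠ y := fun h => hy (h ▸ hx)
  have hfH : f ∈ H.edgeSet := by
    rw [hH, edgeSet_deleteEdges]; exact ⟨hf, hfT⟩
  have hHadj : H.Adj x y := by rwa [← mem_edgeSet, ← hfxy]
  by_contra hfF
  -- a path in HF from x to y
  obtain ⟨p₀⟩ := hF3 x y hHadj.reachable
  set p : HF.Walk x y := (p₀.toPath : HF.Walk x y) with hpdef
  have hp : p.IsPath := p₀.toPath.2
  obtain ⟨u, v, huv, q₁, q₂, hu, hv, hed⟩ := cross_split (S := V₀) p hx hy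
  set g : Sym2 V := s(u, v) with hg
  have hgp : g ∈ p.edges := by rw [hed]; simp
  have hgF : g ∈ F := by
    have : s(u,v) ∈ HF.edgeSet := (HF.mem_edgeSet).mpr huv
    rw [hHF, edgeSet_fromEdgeSet] at this
    exact this.1
  have hgH : g ∈ H.edgeSet := hF1 hgF
  have hgG : g ∈ G.edgeSet := by
    rw [hH, edgeSet_deleteEdges] at hgH; exact hgH.1
  have hgT : g ∉ T := by
    rw [hH, edgeSet_deleteEdges] at hgH; exact hgH.2
  have hfg : f ≠ g := fun h => hfF (h ▸ hgF)
  have hwlt : w f < w g :=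
    lt_of_le_of_ne (hmin g hgG hgT ⟨u, v, rfl, hu, hv⟩) (fun h => hfg (hw hf hgG h))
  -- the exchanged forest
  set F' : Finset (Sym2 V) := insert f (F.erase g) with hF'
  set K := SimpleGraph.fromEdgeSet (↑F' : Set (Sym2 V)) with hK
  -- basic memberships
  have hmemF' : ∀ z : Sym2 V, z ∈ F' ↔ z = f ∨ (z ∈ F ∧ z ≠ g) := by
    intro z
    simp [hF', Finset.mem_insert, Finset.mem_erase, and_comm]
  -- condition 1
  have hc1 : ↑F' ⊆ H.edgeSet := by
    intro z hz
    rw [Finset.mem_coe, hmemF'] at hz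
    rcases hz with rfl | ⟨hzF, _⟩
    · exact hfH
    · exact hF1 hzF
  -- K adjacency of x y
  have hKxy : K.Adj x y := by
    rw [hK, fromEdgeSet_adj]
    exact ⟨by rw [Finset.mem_coe, hmemF']; left; exact hfxy.symm, hxy⟩
  -- transfers of q₁ q₂ into K
  have hnodup : p.edges.Nodup := hp.edges_nodup
  have hgq₁ : g ∉ q₁.edges := by
    rw [hed] at hnodup
    have := List.disjoint_of_nodup_append hnodup
    intro hmem; exact this hmem (by simp)
  have hgq₂ : g ∉ q₂.edges := by
    rw [hed] at hnodup
    have := (List.nodup_append.mp hnodup).2.1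
    simpa using (List.nodup_cons.mp this).1
  have htrans : ∀ {c d : V} (q : HF.Walk c d), g ∉ q.edges →
      ∀ z ∈ q.edges, z ∈ K.edgeSet := by
    intro c d q hgq z hz
    have hzF : z ∈ HF.edgeSet := q.edges_subset_edgeSet hz
    rw [hHF, edgeSet_fromEdgeSet] at hzF
    rw [hK, edgeSet_fromEdgeSet]
    refine ⟨?_, hzF.2⟩
    rw [Finset.mem_coe, hmemF']
    exact Or.inr ⟨hzF.1, fun h => hgq (h ▸ hz)⟩
  have hKuv : K.Reachable u v := by
    have w₁ : K.Walk x u := q₁.transfer K (htrans q₁ hgq₁)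
    have w₂ : K.Walk v y := q₂.transfer K (htrans q₂ hgq₂)
    exact ⟨(w₁.reverse.append (Walk.cons hKxy w₂.reverse))⟩
  -- condition 3: reachability
  have hadjlift : ∀ s t : V, HF.Adj s t → K.Reachable s t := by
    intro s t hst
    have hstF : s(s, t) ∈ HF.edgeSet := (HF.mem_edgeSet).mpr hst
    rw [hHF, edgeSet_fromEdgeSet] at hstF
    by_cases hzg : s(s, t) = g
    · rw [hg, Sym2.eq, Sym2.rel_iff'] at hzg
      rcases hzg with ⟨rfl, rfl⟩ | ⟨rfl, rfl⟩
      · exact hKuv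
      · exact hKuv.symm
    · refine Adj.reachable ?_
      rw [hK, fromEdgeSet_adj]
      refine ⟨?_, hst.ne⟩
      rw [Finset.mem_coe, hmemF']
      exact Or.inr ⟨hstF.1, hzg⟩
  have hreachlift : ∀ s t : V, HF.Reachable s t → K.Reachable s t := by
    intro s t hst
    obtain ⟨q⟩ := hst
    induction q with
    | nil => exact Reachable.refl _
    | cons h q ih => exact (hadjlift _ _ h).trans ih
  have hc3 : ∀ s t : V, H.Reachable s t → K.Reachable s t := fun s t h =>
    hreachlift s t (hF3 s t h)
  -- condition 2: acyclicity
  have hc2 : K.IsAcyclic := by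
    intro z c hc
    by_cases hfc : f ∈ c.edges
    · -- get a walk in K from x to y avoiding f
      have : K.Adj x y ∧ (K \ fromEdgeSet {s(x, y)}).Reachable x y := by
        exact adj_and_reachable_delete_edges_iff_exists_cycle.mpr ⟨z, c, hc, by rwa [← hfxy]⟩
      obtain ⟨r, hr⟩ := reachable_delete_edges_iff_exists_walk.mp this.2
      rw [← hfxy] at hr
      -- transfer r to HF
      have hrtrans : ∀ e ∈ r.edges, e ∈ HF.edgeSet := by
        intro e he
        have heK : e ∈ K.edgeSet := r.edges_subset_edgeSet he
        rw [hK, edgeSet_fromEdgeSet] at heK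
        rw [hHF, edgeSet_fromEdgeSet]
        refine ⟨?_, heK.2⟩
        have := heK.1
        rw [Finset.mem_coe, hmemF'] at this
        rcases this with rfl | ⟨hFmem, _⟩
        · exact absurd he hr
        · exact hFmem
      set r' : HF.Walk x y := r.transfer HF hrtrans with hr'def
      have hgr' : g ∉ r'.edges := by
        rw [hr'def, Walk.edges_transfer]
        intro hmem
        have heK : g ∈ K.edgeSet := r.edges_subset_edgeSet hmem
        rw [hK, edgeSet_fromEdgeSet] at heK
        have := heK.1
        rw [Finset.mem_coe, hmemF'] at this
        rcases this with h | ⟨_, h⟩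
        · exact hfg h.symm
        · exact h rfl
      -- two paths in acyclic HF
      have huniq := isAcyclic_iff_path_unique.mp hF2 p₀.toPath r'.toPath
      have hgp' : g ∈ (r'.toPath : HF.Walk x y).edges := by
        rw [← huniq]; exact hgp
      exact hgr' (Walk.edges_toPath_subset r' hgp')
    · -- transfer c to HF, contradict acyclicity
      have hctrans : ∀ e ∈ c.edges, e ∈ HF.edgeSet := by
        intro e he
        have heK : e ∈ K.edgeSet := c.edges_subset_edgeSet he
        rw [hK, edgeSet_fromEdgeSet] at heK
        rw [hHF, edgeSet_fromEdgeSet]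
        refine ⟨?_, heK.2⟩
        have := heK.1
        rw [Finset.mem_coe, hmemF'] at this
        rcases this with rfl | ⟨hFmem, _⟩
        · exact absurd he hfc
        · exact hFmem
      exact hF2 (c.transfer HF hctrans) (hc.transfer hctrans)
  -- weight comparison
  have hle := hFmin F' ⟨hc1, hc2, hc3⟩
  have hfe : f ∉ F.erase g := fun h => hfF (Finset.mem_of_mem_erase h)
  have hsum1 : ∑ e ∈ F', w e = w f + ∑ e ∈ F.erase g, w e := by
    rw [hF', Finset.sum_insert hfe]
  have hsum2 : ∑ e ∈ F, w e = w g + ∑ e ∈ F.erase g, w e :=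
    (Finset.add_sum_erase F w hgF).symm
  rw [hsum1, hsum2] at hle
  linarith


/-- Let `e = s(a,b) ∈ T = mst(G)` and let `V₀` be the vertex set of the component of
`T \ {e}` containing `a`. Then the minimum-weight non-tree edge crossing the cut
`(V₀, V \ V₀)`, if one exists, belongs to the minimum spanning forest of `G \ T`. -/
theorem replacement_edge_in_msf {V : Type*} [Fintype V] [DecidableEq V]
    (G : SimpleGraph V) (hG : G.Connected)
    (w : Sym2 V → ℝ) (hw : Set.InjOn w G.edgeSet)
    (T : Finset (Sym2 V)) (hT : IsMST G w T)
    (a b : V) (e : Sym2 V) (heq : e = s(a, b)) (he : e ∈ T)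
    (V₀ : Set V)
    (hV₀ : V₀ = {x | (SimpleGraph.fromEdgeSet (↑(T.erase e) : Set (Sym2 V))).Reachable a x})
    (F : Finset (Sym2 V)) (hF : IsMSF (G.deleteEdges (↑T : Set (Sym2 V))) w F)
    (f : Sym2 V) (hf : f ∈ G.edgeSet) (hfT : f ∉ T) (hcross : CrossesCut V₀ f)
    (hmin : ∀ g ∈ G.edgeSet, g ∉ T → CrossesCut V₀ g → w f ≤ w g) :
    f ∈ F :=
  replacement_edge_in_msf' G w hw T V₀ F hF.1.1 hF.1.2.1 hF.1.2.2 hF.2 f hf hfT hcross hmin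
end

section
/- For all n≥1, ∑_{i=0}^{⌊log₂ n⌋} ⌊n/2^i⌋·(2^i − 1) ≤ n·⌊log₂ n⌋ − n + 1. -/
lemma sum_div_le_aux (K : ℕ) : ∀ m : ℕ, 1 ≤ m →
    ∑ j ∈ Finset.range (K + 1), m / 2 ^ j ≤ 2 * m - 1 := by
  induction K with
  | zero => intro m hm; simp; omega
  | succ K ih =>
    intro m hm
    rw [Finset.sum_range_succ']
    have heq : ∀ j : ℕ, m / 2 ^ (j + 1) = (m / 2) / 2 ^ j := by
      intro j
      rw [Nat.div_div_eq_div_mul, ← pow_succ']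
    simp only [heq, pow_zero, Nat.div_one]
    by_cases h : m / 2 = 0
    · simp [h]; omega
    · have := ih (m / 2) (by omega)
      have h2 : 2 * (m / 2) ≤ m := by omega
      omega

lemma block_init_aux : ∀ n : ℕ, 1 ≤ n →
    ((∑ i ∈ Finset.range (Nat.log 2 n + 1), (n / 2 ^ i) * (2 ^ i - 1) : ℕ) : ℤ) ≤
      (n : ℤ) * (Nat.log 2 n : ℤ) - n + 1 := by
  intro n
  induction n using Nat.strong_induction_on with
  | _ n ih =>
  intro hn
  rcases eq_or_lt_of_le hn with h1 | h2
  · rw [← h1]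
    norm_num
  · -- n ≥ 2
    set m := n / 2 with hm_def
    have hm : 1 ≤ m := by
      rw [hm_def]; omega
    have hmn : m < n := by rw [hm_def]; omega
    have hlogpos : 0 < Nat.log 2 n := Nat.log_pos (by norm_num) (by omega)
    have hlog : Nat.log 2 n = Nat.log 2 m + 1 := by
      have := Nat.log_div_base (b := 2) (n := n)
      rw [hm_def]; omega
    have hdiv : ∀ i : ℕ, n / 2 ^ (i + 1) = m / 2 ^ i := by
      intro i
      rw [hm_def, Nat.div_div_eq_div_mul, ← pow_succ']
    have key : (∑ i ∈ Finset.range (Nat.log 2 n + 1), (n / 2 ^ i) * (2 ^ i - 1))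
        = 2 * (∑ i ∈ Finset.range (Nat.log 2 m + 1), (m / 2 ^ i) * (2 ^ i - 1))
          + ∑ i ∈ Finset.range (Nat.log 2 m + 1), m / 2 ^ i := by
      rw [hlog, Finset.sum_range_succ']
      simp only [pow_zero, Nat.div_one, Nat.sub_self, mul_zero, add_zero]
      rw [Finset.mul_sum, ← Finset.sum_add_distrib]
      apply Finset.sum_congr rfl
      intro i _
      rw [hdiv i]
      have h1i : 1 ≤ (2:ℕ) ^ i := Nat.one_le_two_pow
      have h2i : (2:ℕ) ^ (i + 1) = 2 * 2 ^ i := by rw [pow_succ']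
      have hpow : (2:ℕ) ^ (i + 1) - 1 = 2 * (2 ^ i - 1) + 1 := by omega
      rw [hpow]
      ring
    have hsum := sum_div_le_aux (Nat.log 2 m) m hm
    have ihm := ih m hmn hm
    have h2m : 2 * m ≤ n := by rw [hm_def]; omega
    have hsum' : ((∑ i ∈ Finset.range (Nat.log 2 m + 1), m / 2 ^ i : ℕ) : ℤ)
        ≤ 2 * (m : ℤ) - 1 := by
      have h1 : (∑ i ∈ Finset.range (Nat.log 2 m + 1), m / 2 ^ i) + 1 ≤ 2 * m := by omega
      have h2 : ((∑ i ∈ Finset.range (Nat.log 2 m + 1), m / 2 ^ i : ℕ) : ℤ) + 1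
          ≤ 2 * (m : ℤ) := by exact_mod_cast h1
      linarith
    have keyZ : ((∑ i ∈ Finset.range (Nat.log 2 n + 1), (n / 2 ^ i) * (2 ^ i - 1) : ℕ) : ℤ)
        = 2 * ((∑ i ∈ Finset.range (Nat.log 2 m + 1), (m / 2 ^ i) * (2 ^ i - 1) : ℕ) : ℤ)
          + ((∑ i ∈ Finset.range (Nat.log 2 m + 1), m / 2 ^ i : ℕ) : ℤ) := by
      exact_mod_cast congrArg (Nat.cast : ℕ → ℤ) key
    rw [keyZ, hlog, Nat.cast_add, Nat.cast_one]
    have h2m' : (2 * m : ℤ) ≤ (n : ℤ) := by exact_mod_cast h2m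
    have hmul : (2 * m : ℤ) * (Nat.log 2 m : ℤ) ≤ (n : ℤ) * (Nat.log 2 m : ℤ) :=
      mul_le_mul_of_nonneg_right h2m' (by positivity)
    linarith

/-- For all `n ≥ 1`, `∑_{i=0}^{⌊log₂ n⌋} ⌊n/2^i⌋ · (2^i − 1) ≤ n·⌊log₂ n⌋ − n + 1`. -/
theorem block_init_comparisons (n : ℕ) (hn : 1 ≤ n) :
    ((∑ i ∈ Finset.range (Nat.log 2 n + 1), (n / 2 ^ i) * (2 ^ i - 1) : ℕ) : ℤ) ≤
      (n : ℤ) * (Nat.log 2 n : ℤ) - n + 1 := by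
  exact block_init_aux n hn
end

section
/- Suppose a sequence of blocks has sizes that are powers of two arranged in bitonic order (strictly increasing then strictly decreasing, with at most the two largest equal). Then the number of blocks is at most 2⌊log₂ n⌋ + 2, where n is the total number of elements. -/
lemma strict_pow_len (n : ℕ) (hn : 0 < n) (m : List ℕ)
    (hp : m.Pairwise (· < ·))
    (hmem : ∀ x ∈ m, (∃ k : ℕ, x = 2 ^ k) ∧ x ≤ n) :
    m.length ≤ Nat.log 2 n + 1 := by
  have hnd : m.Nodup := hp.imp (fun h => Nat.ne_of_lt h)
  have hsub : m.toFinset ⊆ (Finset.range (Nat.log 2 n + 1)).image (2 ^ ·) := by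
    intro x hx
    rw [List.mem_toFinset] at hx
    obtain ⟨⟨k, rfl⟩, hle⟩ := hmem x hx
    refine Finset.mem_image.2 ⟨k, Finset.mem_range.2 ?_, rfl⟩
    have : k ≤ Nat.log 2 n := (Nat.le_log_iff_pow_le one_lt_two hn.ne').2 hle
    omega
  calc m.length = m.toFinset.card := (List.toFinset_card_of_nodup hnd).symm
    _ ≤ ((Finset.range (Nat.log 2 n + 1)).image (2 ^ ·)).card :=
        Finset.card_le_card hsub
    _ ≤ Nat.log 2 n + 1 := le_trans Finset.card_image_le (by simp)


/-- If a list of block sizes consists of powers of two arranged in bitonic order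
(strictly increasing, then strictly decreasing, where at most the two largest blocks
may be equal), and the sizes sum to `n`, then there are at most `2⌊log₂ n⌋ + 2`
blocks. -/
theorem bitonic_block_count (n : ℕ) (l : List ℕ)
    (hpow : ∀ x ∈ l, ∃ k : ℕ, x = 2 ^ k)
    (hsum : l.sum = n)
    (hbitonic : ∃ l₁ l₂ : List ℕ, l = l₁ ++ l₂ ∧
      l₁.Chain' (· < ·) ∧ l₂.Chain' (· > ·) ∧
      ∀ a ∈ l₁.getLast?, ∀ b ∈ l₂.head?, b ≤ a) :
    l.length ≤ 2 * Nat.log 2 n + 2 := by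
  obtain ⟨l₁, l₂, rfl, h₁, h₂, _⟩ := hbitonic
  have hle : ∀ x ∈ l₁ ++ l₂, x ≤ n := by
    intro x hx
    exact hsum ▸ List.single_le_sum (fun _ _ => Nat.zero_le _) x hx
  rcases Nat.eq_zero_or_pos n with rfl | hn
  · have : l₁ ++ l₂ = [] := by
      rcases List.eq_nil_or_concat (l₁ ++ l₂) with h | ⟨L, a, h⟩
      · exact h
      · exfalso
        have ha : a ∈ l₁ ++ l₂ := by rw [h]; simp
        obtain ⟨k, rfl⟩ := hpow a ha
        have := hle _ ha
        have := Nat.one_le_two_pow (n := k)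
        omega
    simp [this]
  · have hlen₁ : l₁.length ≤ Nat.log 2 n + 1 := by
      refine strict_pow_len n hn l₁ (List.isChain_iff_pairwise.1 h₁) ?_
      intro x hx
      exact ⟨hpow x (List.mem_append_left _ hx), hle x (List.mem_append_left _ hx)⟩
    have hlen₂ : l₂.length ≤ Nat.log 2 n + 1 := by
      have hp : l₂.reverse.Pairwise (· < ·) := by
        rw [List.pairwise_reverse]
        exact List.isChain_iff_pairwise.1 h₂
      have := strict_pow_len n hn l₂.reverse hp (by
        intro x hx
        rw [List.mem_reverse] at hx
        exact ⟨hpow x (List.mem_append_right _ hx), hle x (List.mem_append_right _ hx)⟩)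
      simpa using this
    simp only [List.length_append]
    omega
end

section
/- Let G be a connected graph with distinct edge weights, T=mst(G), and root T at r. Obtain G' from G by replacing every non-tree edge (u,v) for which neither endpoint is an ancestor of the other with the two edges (u, lca(u,v)) and (v, lca(u,v)), each with weight w(u,v) (keeping only the lightest among resulting parallel edges). Then for every tree edge e∈T: min{w(f) : f is a non-tree edge of G whose tree path C(f) contains e} = min{w'(f') : f' is a non-tree edge of G' whose tree path contains e} (with min∅=∞). -/
open SimpleGraph

/-- In the tree `fromEdgeSet ↑T` rooted at `r`, `a` is an ancestor of `b`:
`a` lies on the (unique) tree path from `r` to `b`. -/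
def Anc {V : Type*} (T : Finset (Sym2 V)) (r a b : V) : Prop :=
  ∀ p : (SimpleGraph.fromEdgeSet (↑T : Set (Sym2 V))).Walk r b, p.IsPath → a ∈ p.support

/-- `ℓ` is the least common ancestor of `u` and `v` in the tree `fromEdgeSet ↑T`
rooted at `r`. -/
def IsLCA {V : Type*} (T : Finset (Sym2 V)) (r u v ℓ : V) : Prop :=
  Anc T r ℓ u ∧ Anc T r ℓ v ∧ ∀ c : V, Anc T r c u → Anc T r c v → Anc T r c ℓ

/-- The weighted non-tree edges of the transformed graph `G'`: a non-tree edge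
`s(u,v)` with one endpoint an ancestor of the other is kept with its weight, while a
non-tree edge `s(u,v)` with `ℓ = lca(u,v) ∉ {u,v}` is replaced by the two edges
`s(u,ℓ)` and `s(v,ℓ)`, each carrying the weight `w s(u,v)`. -/
def NewEdges {V : Type*} (G : SimpleGraph V) (w : Sym2 V → ℝ) (T : Finset (Sym2 V))
    (r : V) : Set (Sym2 V × ℝ) :=
  {p | ∃ u v : V, s(u, v) ∈ G.edgeSet ∧ s(u, v) ∉ T ∧
        (Anc T r u v ∨ Anc T r v u) ∧ p = (s(u, v), w s(u, v))} ∪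
  {p | ∃ u v ℓ : V, s(u, v) ∈ G.edgeSet ∧ s(u, v) ∉ T ∧
        ¬ Anc T r u v ∧ ¬ Anc T r v u ∧ IsLCA T r u v ℓ ∧
        (p = (s(u, ℓ), w s(u, v)) ∨ p = (s(v, ℓ), w s(u, v)))}

section Helpers

open SimpleGraph Walk

variable {V : Type*}

private lemma path_unique' {G : SimpleGraph V} (hG : G.IsTree) {a b : V}
    {p q : G.Walk a b} (hp : p.IsPath) (hq : q.IsPath) : p = q := by
  obtain ⟨x, -, hu⟩ := hG.existsUnique_path a b
  rw [hu p hp, hu q hq]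

private lemma exists_last_prop {G : SimpleGraph V} (P : V → Prop) {r u : V} (p : G.Walk r u)
    (hex : ∃ c ∈ p.support, P c) :
    ∃ (ℓ : V) (p1 : G.Walk r ℓ) (p2 : G.Walk ℓ u), p = p1.append p2 ∧ P ℓ ∧
      ∀ c ∈ p.support, P c → c ∈ p1.support := by
  induction p with
  | nil =>
      obtain ⟨c, hc, hPc⟩ := hex
      simp only [support_nil, List.mem_singleton] at hc
      subst hc
      exact ⟨c, Walk.nil, Walk.nil, rfl, hPc, by
        intro d hd _; simpa [support_nil] using hd⟩
  | @cons r x u h q ih =>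
      by_cases hq : ∃ c ∈ q.support, P c
      · obtain ⟨ℓ, q1, q2, hsplit, hPℓ, hmax⟩ := ih hq
        refine ⟨ℓ, Walk.cons h q1, q2, by simp [hsplit], hPℓ, ?_⟩
        intro c hc hPc
        simp only [support_cons, List.mem_cons] at hc ⊢
        rcases hc with rfl | hc
        · exact Or.inl rfl
        · exact Or.inr (hmax c hc hPc)
      · push_neg at hq
        obtain ⟨c, hc, hPc⟩ := hex
        simp only [support_cons, List.mem_cons] at hc
        rcases hc with rfl | hc
        · refine ⟨c, Walk.nil, Walk.cons h q, rfl, hPc, ?_⟩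
          intro d hd hPd
          simp only [support_cons, List.mem_cons] at hd
          rcases hd with rfl | hd
          · simp
          · exact absurd hPd (hq d hd)
        · exact absurd hPc (hq c hc)

private lemma lca_struct {T : Finset (Sym2 V)}
    (hH : (SimpleGraph.fromEdgeSet (↑T : Set (Sym2 V))).IsTree) (r u v : V) :
    ∃ (ℓ : V) (pu : (SimpleGraph.fromEdgeSet (↑T : Set (Sym2 V))).Walk u ℓ)
      (pv : (SimpleGraph.fromEdgeSet (↑T : Set (Sym2 V))).Walk ℓ v),
      (pu.append pv).IsPath ∧ IsLCA T r u v ℓ := by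
  obtain ⟨p, hp, hpun⟩ := hH.existsUnique_path r u
  obtain ⟨q, hq, hqun⟩ := hH.existsUnique_path r v
  obtain ⟨ℓ, p1, p2, rfl, hPℓ, hmax⟩ := exists_last_prop (· ∈ q.support) p
    ⟨r, p.start_mem_support, q.start_mem_support⟩
  obtain ⟨q1, q2, rfl⟩ := Walk.mem_support_iff_exists_append.mp hPℓ
  have hp1 : p1.IsPath := hp.of_append_left
  have hp2 : p2.IsPath := hp.of_append_right
  have hq1 : q1.IsPath := hq.of_append_left
  have hq2 : q2.IsPath := hq.of_append_right
  have hcommon : ∀ x, x ∈ p2.support → x ∈ q2.support → x = ℓ := by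
    intro x hx2 hxq2
    have hxp : x ∈ (p1.append p2).support := Walk.subset_support_append_right _ _ hx2
    have hxq : x ∈ (q1.append q2).support := Walk.subset_support_append_right _ _ hxq2
    have hx1 : x ∈ p1.support := hmax x hxp hxq
    by_contra hne
    have hxtail : x ∈ p2.support.tail := by
      have := p2.support_eq_cons ▸ hx2
      rcases List.mem_cons.mp this with rfl | h'
      · exact absurd rfl hne
      · exact h'
    have hnodup := hp.support_nodup
    rw [Walk.support_append, List.nodup_append] at hnodup
    exact hnodup.2.2 x hx1 x hxtail rfl
  refine ⟨ℓ, p2.reverse, q2, ?_, ?_, ?_, ?_⟩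
  · apply Walk.IsPath.mk'
    rw [Walk.support_append, List.nodup_append]
    refine ⟨by simpa [Walk.support_reverse] using hp2.support_nodup,
      hq2.support_nodup.tail, ?_⟩
    intro x hx x' hx' hxx'; subst hxx'
    have hx2 : x ∈ p2.support := by
      simpa [Walk.support_reverse] using hx
    have hxq2 : x ∈ q2.support := List.mem_of_mem_tail hx'
    have hxl : x = ℓ := hcommon x hx2 hxq2
    subst hxl
    have hnd := hq2.support_nodup
    rw [q2.support_eq_cons] at hnd
    exact (List.nodup_cons.mp hnd).1 hx'
  · intro p' hp'
    rw [hpun p' hp']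
    exact Walk.subset_support_append_left _ _ p1.end_mem_support
  · intro q' hq'
    rw [hqun q' hq']
    exact Walk.subset_support_append_right _ _ q2.start_mem_support
  · intro c hcu hcv p'' hp''
    have hcp := hcu (p1.append p2) hp
    have hcq := hcv (q1.append q2) hq
    have hc1 : c ∈ p1.support := hmax c hcp hcq
    rw [path_unique' hH hp'' hp1]
    exact hc1

private lemma anc_antisymm {T : Finset (Sym2 V)}
    (hH : (SimpleGraph.fromEdgeSet (↑T : Set (Sym2 V))).IsTree) {r a b : V}
    (hab : Anc T r a b) (hba : Anc T r b a) : a = b := by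
  obtain ⟨pb, hpb, -⟩ := hH.existsUnique_path r b
  have ha : a ∈ pb.support := hab pb hpb
  obtain ⟨p1, p2, rfl⟩ := Walk.mem_support_iff_exists_append.mp ha
  have hb1 : b ∈ p1.support := hba p1 hpb.of_append_left
  by_contra hne
  have hbtail : b ∈ p2.support.tail := by
    have := p2.support_eq_cons ▸ p2.end_mem_support
    rcases List.mem_cons.mp this with h' | h'
    · exact absurd h'.symm hne
    · exact h'
  have hnodup := hpb.support_nodup
  rw [Walk.support_append, List.nodup_append] at hnodup
  exact hnodup.2.2 b hb1 b hbtail rfl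

private lemma lca_unique {T : Finset (Sym2 V)}
    (hH : (SimpleGraph.fromEdgeSet (↑T : Set (Sym2 V))).IsTree) {r u v ℓ ℓ' : V}
    (h : IsLCA T r u v ℓ) (h' : IsLCA T r u v ℓ') : ℓ = ℓ' :=
  anc_antisymm hH (h'.2.2 ℓ h.1 h.2.1) (h.2.2 ℓ' h'.1 h'.2.1)

private lemma onTreePath_pair {T : Finset (Sym2 V)} {e : Sym2 V} {a b : V}
    (h : OnTreePath T e s(a, b)) :
    ∃ p : (SimpleGraph.fromEdgeSet (↑T : Set (Sym2 V))).Walk a b,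
      p.IsPath ∧ e ∈ p.edges := by
  obtain ⟨x, y, p, hp, hxy, he⟩ := h
  rcases Sym2.eq_iff.mp hxy with ⟨rfl, rfl⟩ | ⟨rfl, rfl⟩
  · exact ⟨p, hp, he⟩
  · exact ⟨p.reverse, hp.reverse, by simpa [Walk.edges_reverse] using he⟩

end Helpers


/-- The lca transformation preserves tree-edge sensitivities: for every tree edge
`e ∈ T`, the minimum weight of a non-tree edge of `G` whose tree path contains `e`
equals the minimum weight of a non-tree edge of the transformed graph `G'` whose tree
path contains `e` (minima taken in `EReal`, so `min ∅ = ∞`). -/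
theorem lca_transform_preserves_sensitivity {V : Type*} [Fintype V] [DecidableEq V]
    (G : SimpleGraph V) (hG : G.Connected)
    (w : Sym2 V → ℝ) (hw : Set.InjOn w G.edgeSet)
    (T : Finset (Sym2 V)) (hT : IsMST G w T) (r : V)
    (e : Sym2 V) (he : e ∈ T) :
    sInf ((fun f => ((w f : ℝ) : EReal)) ''
        {f : Sym2 V | f ∈ G.edgeSet ∧ f ∉ T ∧ OnTreePath T e f}) =
    sInf ((fun p => ((p.2 : ℝ) : EReal)) ''
        {p : Sym2 V × ℝ | p ∈ NewEdges G w T r ∧ OnTreePath T e p.1}) := by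
  obtain ⟨⟨hTsub, hH⟩, -⟩ := hT
  refine congrArg sInf (Set.Subset.antisymm ?_ ?_)
  · rintro x ⟨f, hf, rfl⟩
    obtain ⟨hfG, hfT, hOTP⟩ := hf
    induction f using Sym2.ind with
    | _ u v =>
    by_cases hanc : Anc T r u v ∨ Anc T r v u
    · exact ⟨(s(u, v), w s(u, v)), ⟨Or.inl ⟨u, v, hfG, hfT, hanc, rfl⟩, hOTP⟩, rfl⟩
    · push_neg at hanc
      obtain ⟨ℓ, pu, pv, hpath, hlca⟩ := lca_struct hH r u v
      obtain ⟨pw, hpw, hepw⟩ := onTreePath_pair hOTP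
      have hpw' : pw = pu.append pv := path_unique' hH hpw hpath
      rw [hpw', SimpleGraph.Walk.edges_append, List.mem_append] at hepw
      rcases hepw with hel | her
      · exact ⟨(s(u, ℓ), w s(u, v)),
          ⟨Or.inr ⟨u, v, ℓ, hfG, hfT, hanc.1, hanc.2, hlca, Or.inl rfl⟩,
            ⟨u, ℓ, pu, hpath.of_append_left, rfl, hel⟩⟩, rfl⟩
      · exact ⟨(s(v, ℓ), w s(u, v)),
          ⟨Or.inr ⟨u, v, ℓ, hfG, hfT, hanc.1, hanc.2, hlca, Or.inr rfl⟩,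
            ⟨ℓ, v, pv, hpath.of_append_right, Sym2.eq_swap, her⟩⟩, rfl⟩
  · rintro x ⟨⟨f, wt⟩, ⟨hNE, hOTP⟩, rfl⟩
    rcases hNE with ⟨u, v, hG1, hT1, hanc, heq⟩ | ⟨u, v, ℓ, hG1, hT1, hnu, hnv, hlca, hor⟩
    · simp only [Prod.mk.injEq] at heq
      obtain ⟨rfl, rfl⟩ := heq
      exact ⟨s(u, v), ⟨hG1, hT1, hOTP⟩, rfl⟩
    · obtain ⟨ℓ₀, pu, pv, hpath, hlca₀⟩ := lca_struct hH r u v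
      have hℓ : ℓ = ℓ₀ := lca_unique hH hlca hlca₀
      subst hℓ
      rcases hor with heq | heq <;> simp only [Prod.mk.injEq] at heq <;>
        obtain ⟨rfl, rfl⟩ := heq
      · obtain ⟨pw, hpw, hepw⟩ := onTreePath_pair hOTP
        have hpw' : pw = pu := path_unique' hH hpw hpath.of_append_left
        refine ⟨s(u, v), ⟨hG1, hT1, ⟨u, v, pu.append pv, hpath, rfl, ?_⟩⟩, rfl⟩
        rw [SimpleGraph.Walk.edges_append, List.mem_append]
        exact Or.inl (hpw' ▸ hepw)
      · obtain ⟨pw, hpw, hepw⟩ := onTreePath_pair hOTP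
        have hpw' : pw.reverse = pv := path_unique' hH hpw.reverse hpath.of_append_right
        refine ⟨s(u, v), ⟨hG1, hT1, ⟨u, v, pu.append pv, hpath, rfl, ?_⟩⟩, rfl⟩
        rw [SimpleGraph.Walk.edges_append, List.mem_append]
        refine Or.inr ?_
        rw [← hpw']
        simpa [SimpleGraph.Walk.edges_reverse] using hepw
end
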